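/- Let $\ell : (0, \infty) \to (0, \infty)$ be differentiable, non-decreasing, with $\ell'(u) > 0$ for all $u$, and suppose $\ell'$ is non-decreasing on $[d, \infty)$ and $\ell'(d) \leq \ell'(u)$ for all $u \geq d$. Then for every $x > d$ and every $z > x - d$: $\Big[\frac{\ell(x-z)}{\ell'(x)} - \frac{\ell(x)}{\ell'(x)}\Big] - \Big[\frac{\ell(x-z)}{\ell'(d)} - \frac{\ell(d)}{\ell'(d)} - (x-d)\Big] \geq 0$, where $\ell$ is extended by an arbitrary non-negative non-decreasing function on $(-\infty, 0]$ with $\ell(y) \leq \ell(d)$ for $y \leq d$. -/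

import Mathlib

theorem stmt13 (f f' : ℝ → ℝ) (d : ℝ) (hd : 0 < d)
    (hderiv : ∀ u ∈ Set.Ioi (0:ℝ), HasDerivAt f (f' u) u)
    (hpos : ∀ u ∈ Set.Ioi (0:ℝ), 0 < f' u)
    (hfnonneg : ∀ y : ℝ, 0 ≤ f y)
    (hfmono : MonotoneOn f (Set.Ioi 0))
    (hle : ∀ y ≤ d, f y ≤ f d)
    (hmono : MonotoneOn f' (Set.Ici d)) :
    ∀ x > d, ∀ z > x - d,
      0 ≤ (f (x-z) / f' x - f x / f' x) - (f (x-z) / f' d - f d / f' d - (x - d)) := by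
  intro x hx z hz
  have hx0 : (0:ℝ) < x := lt_trans hd hx
  have hfd : 0 < f' d := hpos d hd
  have hfx : 0 < f' x := hpos x hx0
  have hdx : f' d ≤ f' x := hmono (le_refl d) (le_of_lt hx) (le_of_lt hx)
  have hxz : f (x - z) ≤ f d := hle _ (by linarith)
  -- MVT on [d, x]
  have hcont : ContinuousOn f (Set.Icc d x) := fun u hu =>
    ((hderiv u (lt_of_lt_of_le hd hu.1)).continuousAt).continuousWithinAt
  have hderiv' : ∀ u ∈ Set.Ioo d x, HasDerivAt f (f' u) u := fun u hu =>
    hderiv u (lt_trans hd hu.1)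
  obtain ⟨ω, hω, hωeq⟩ := exists_hasDerivAt_eq_slope f f' hx hcont hderiv'
  have hωx : f' ω ≤ f' x := hmono (le_of_lt hω.1) (le_of_lt hx) (le_of_lt hω.2)
  have hωd : f' d ≤ f' ω := hmono (le_refl d) (le_of_lt hω.1) (le_of_lt hω.1)
  have hxd : x - d ≠ 0 := by linarith
  have hslope : f x - f d = f' ω * (x - d) := by
    rw [hωeq]; field_simp
  have hωpos : 0 < f' ω := lt_of_lt_of_le hfd hωd
  have key : (f (x-z) / f' x - f x / f' x) - (f (x-z) / f' d - f d / f' d - (x - d))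
      = (f d - f (x-z)) * (1 / f' d - 1 / f' x) + (x - d) * (1 - f' ω / f' x) := by
    field_simp
    linear_combination (- f' d) * hslope
  rw [key]
  have h1 : 0 ≤ (f d - f (x-z)) * (1 / f' d - 1 / f' x) := by
    apply mul_nonneg (by linarith)
    have := one_div_le_one_div_of_le hfd hdx
    linarith
  have h2 : 0 ≤ (x - d) * (1 - f' ω / f' x) := by
    apply mul_nonneg (by linarith)
    have : f' ω / f' x ≤ 1 := (div_le_one hfx).mpr hωx
    linarith
  linarith
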